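/- For all nonnegative integers nL1, nL2, nL3, nH1, nH2, nH3, the insolvency-based insurance cost function satisfies the submodularity inequality c(nL1+nL3, nH1+nH3) + c(nL2+nL3, nH2+nH3) ≥ c(nL1+nL2+nL3, nH1+nH2+nH3) + c(nL3, nH3). Moreover, the inequality is strict whenever nL1 + nH1 > 0 and nL2 + nH2 > 0 (i.e., whenever the two pools have nonempty non-overlapping portions). -/

import Mathlib

lemma sqrt_submod_le {a s t : ℝ} (ha : 0 ≤ a) (hs : 0 ≤ s) (ht : 0 ≤ t) :
    Real.sqrt (a + s + t) + Real.sqrt t ≤ Real.sqrt (a + t) + Real.sqrt (s + t) := by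
  have hu := Real.sq_sqrt (by linarith : (0:ℝ) ≤ a + t)
  have hv := Real.sq_sqrt (by linarith : (0:ℝ) ≤ s + t)
  have hw := Real.sq_sqrt (by linarith : (0:ℝ) ≤ a + s + t)
  have hz := Real.sq_sqrt ht
  have hun := Real.sqrt_nonneg (a + t)
  have hvn := Real.sqrt_nonneg (s + t)
  have hwn := Real.sqrt_nonneg (a + s + t)
  have hzn := Real.sqrt_nonneg t
  have key : Real.sqrt (a + s + t) * Real.sqrt t ≤ Real.sqrt (a + t) * Real.sqrt (s + t) := by
    rw [← Real.sqrt_mul (by linarith), ← Real.sqrt_mul (by linarith)]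
    apply Real.sqrt_le_sqrt
    nlinarith
  nlinarith [sq_nonneg (Real.sqrt (a+t) + Real.sqrt (s+t) - Real.sqrt (a+s+t) - Real.sqrt t)]

lemma sqrt_submod_lt {a s t : ℝ} (ha : 0 < a) (hs : 0 < s) (ht : 0 ≤ t) :
    Real.sqrt (a + s + t) + Real.sqrt t < Real.sqrt (a + t) + Real.sqrt (s + t) := by
  have hu := Real.sq_sqrt (by linarith : (0:ℝ) ≤ a + t)
  have hv := Real.sq_sqrt (by linarith : (0:ℝ) ≤ s + t)
  have hw := Real.sq_sqrt (by linarith : (0:ℝ) ≤ a + s + t)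
  have hz := Real.sq_sqrt ht
  have hun := Real.sqrt_nonneg (a + t)
  have hvn := Real.sqrt_nonneg (s + t)
  have hwn := Real.sqrt_nonneg (a + s + t)
  have hzn := Real.sqrt_nonneg t
  have key : Real.sqrt (a + s + t) * Real.sqrt t < Real.sqrt (a + t) * Real.sqrt (s + t) := by
    rw [← Real.sqrt_mul (by linarith), ← Real.sqrt_mul (by linarith)]
    apply Real.sqrt_lt_sqrt (by positivity)
    nlinarith
  nlinarith [add_pos_of_nonneg_of_pos (add_nonneg hwn hzn)
    (by nlinarith : (0:ℝ) < Real.sqrt (a+t) + Real.sqrt (s+t))]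

/-- Submodularity of the insolvency-based insurance cost function, with strictness
whenever the two pools have nonempty non-overlapping portions. -/
theorem insolvency_cost_submodular
    (V b rL rH : ℝ) (hV : 0 < V) (hb : 0 < b)
    (hrL : 0 < rL) (hLH : rL < rH) (hrH : rH < 1 / 2)
    (c : ℕ → ℕ → ℝ)
    (hc : ∀ nL nH : ℕ, c nL nH =
      V * (rL * nL + rH * nH +
        b * Real.sqrt (nL * (rL * (1 - rL)) + nH * (rH * (1 - rH)))))
    (nL1 nL2 nL3 nH1 nH2 nH3 : ℕ) :
    c (nL1 + nL3) (nH1 + nH3) + c (nL2 + nL3) (nH2 + nH3) ≥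
      c (nL1 + nL2 + nL3) (nH1 + nH2 + nH3) + c nL3 nH3 ∧
    (0 < nL1 + nH1 → 0 < nL2 + nH2 →
      c (nL1 + nL3) (nH1 + nH3) + c (nL2 + nL3) (nH2 + nH3) >
        c (nL1 + nL2 + nL3) (nH1 + nH2 + nH3) + c nL3 nH3) := by
  have hRL : 0 < rL * (1 - rL) := by nlinarith
  have hRH : 0 < rH * (1 - rH) := by nlinarith
  set a : ℝ := nL1 * (rL * (1 - rL)) + nH1 * (rH * (1 - rH)) with hadef
  set s : ℝ := nL2 * (rL * (1 - rL)) + nH2 * (rH * (1 - rH)) with hsdef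
  set t : ℝ := nL3 * (rL * (1 - rL)) + nH3 * (rH * (1 - rH)) with htdef
  have ha : 0 ≤ a := by positivity
  have hs : 0 ≤ s := by positivity
  have ht : 0 ≤ t := by positivity
  have e1 : ((nL1 + nL3 : ℕ) : ℝ) * (rL * (1 - rL)) + ((nH1 + nH3 : ℕ) : ℝ) * (rH * (1 - rH))
      = a + t := by push_cast; ring
  have e2 : ((nL2 + nL3 : ℕ) : ℝ) * (rL * (1 - rL)) + ((nH2 + nH3 : ℕ) : ℝ) * (rH * (1 - rH))
      = s + t := by push_cast; ring
  have e3 : ((nL1 + nL2 + nL3 : ℕ) : ℝ) * (rL * (1 - rL)) + ((nH1 + nH2 + nH3 : ℕ) : ℝ) * (rH * (1 - rH))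
      = a + s + t := by push_cast; ring
  have hVb : 0 < V * b := mul_pos hV hb
  constructor
  · have key := sqrt_submod_le ha hs ht
    rw [hc, hc, hc, hc, e1, e2, e3]
    push_cast
    have := mul_le_mul_of_nonneg_left key hVb.le
    nlinarith [this]
  · intro h1 h2
    have ha' : 0 < a := by
      have h : 0 < nL1 ∨ 0 < nH1 := by omega
      have p1 : (0:ℝ) ≤ (nL1:ℝ) * (rL * (1 - rL)) := by positivity
      have p2 : (0:ℝ) ≤ (nH1:ℝ) * (rH * (1 - rH)) := by positivity
      rcases h with h | h
      · have h1 : (1:ℝ) ≤ nL1 := by exact_mod_cast h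
        have := le_mul_of_one_le_left hRL.le h1
        linarith
      · have h1 : (1:ℝ) ≤ nH1 := by exact_mod_cast h
        have := le_mul_of_one_le_left hRH.le h1
        linarith
    have hs' : 0 < s := by
      have h : 0 < nL2 ∨ 0 < nH2 := by omega
      have p1 : (0:ℝ) ≤ (nL2:ℝ) * (rL * (1 - rL)) := by positivity
      have p2 : (0:ℝ) ≤ (nH2:ℝ) * (rH * (1 - rH)) := by positivity
      rcases h with h | h
      · have h1 : (1:ℝ) ≤ nL2 := by exact_mod_cast h
        have := le_mul_of_one_le_left hRL.le h1
        linarith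
      · have h1 : (1:ℝ) ≤ nH2 := by exact_mod_cast h
        have := le_mul_of_one_le_left hRH.le h1
        linarith
    have key := sqrt_submod_lt ha' hs' ht
    rw [hc, hc, hc, hc, e1, e2, e3]
    push_cast
    rw [← htdef]
    have h := mul_lt_mul_of_pos_left key hVb
    ring_nf at h ⊢
    linarith
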